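/- Define, on the open set Ω = {(ξ,τ) ∈ ℝ² : 4 + 2ξ + 2τ > 0 and 4 + 2ξ − 2τ > 0}, the functions u₁(ξ,τ) = ((5ξ − 5τ + 10)√(4+2ξ+2τ) − (8+4ξ)√(4+2ξ−2τ))/(2√(4+2ξ−2τ)) and u₂(ξ,τ) = ((3τ − 3ξ − 6)√(4+2ξ+2τ) + 8√(4+2ξ−2τ))/(2√(4+2ξ−2τ)). Then (u₁,u₂) satisfies the spacetime wave map system ∂²u₁/∂τ² − ∂²u₁/∂ξ² = (1/(2u₁))((∂u₁/∂τ)² + (∂u₂/∂τ)² − (∂u₁/∂ξ)² − (∂u₂/∂ξ)²), ∂²u₂/∂τ² − ∂²u₂/∂ξ² = (1/u₁)((∂u₁/∂τ)(∂u₂/∂τ) − (∂u₁/∂ξ)(∂u₂/∂ξ)) at every point of Ω where u₁ ≠ 0, and satisfies the real-analytic initial conditions u₁(ξ,0) = 1 + ξ/2, u₂(ξ,0) = 1 − (3/2)ξ, ∂u₁/∂τ(ξ,0) = 0, ∂u₂/∂τ(ξ,0) = 0 for all ξ > −2. -/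

import Mathlib

/-- Partial derivative with respect to the first variable `ξ`. -/
noncomputable def pdXi (f : ℝ × ℝ → ℝ) (p : ℝ × ℝ) : ℝ :=
  deriv (fun x => f (x, p.2)) p.1

/-- Partial derivative with respect to the second variable `τ`. -/
noncomputable def pdTau (f : ℝ × ℝ → ℝ) (p : ℝ × ℝ) : ℝ :=
  deriv (fun t => f (p.1, t)) p.2

/-- The spacetime solution `u₁` of Example 4.1; `p = (ξ, τ)`. -/
noncomputable def U1 : ℝ × ℝ → ℝ := fun p =>
  ((5 * p.1 - 5 * p.2 + 10) * Real.sqrt (4 + 2 * p.1 + 2 * p.2)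
    - (8 + 4 * p.1) * Real.sqrt (4 + 2 * p.1 - 2 * p.2)) /
    (2 * Real.sqrt (4 + 2 * p.1 - 2 * p.2))

/-- The spacetime solution `u₂` of Example 4.1; `p = (ξ, τ)`. -/
noncomputable def U2 : ℝ × ℝ → ℝ := fun p =>
  ((3 * p.2 - 3 * p.1 - 6) * Real.sqrt (4 + 2 * p.1 + 2 * p.2)
    + 8 * Real.sqrt (4 + 2 * p.1 - 2 * p.2)) /
    (2 * Real.sqrt (4 + 2 * p.1 - 2 * p.2))

noncomputable def Qf (p : ℝ × ℝ) : ℝ := (4+2*p.1)^2 - 4*p.2^2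

lemma haff (x : ℝ) : HasDerivAt (fun x : ℝ => 4 + 2*x) 2 x := by
  simpa using ((hasDerivAt_id x).const_mul 2).const_add 4

lemma hQx (t x : ℝ) : HasDerivAt (fun x => Qf (x, t)) (4*(4+2*x)) x := by
  have h := ((haff x).pow 2).sub_const (4*t^2)
  simp only [Qf]
  refine h.congr_deriv ?_
  ring

lemma hQt (x t : ℝ) : HasDerivAt (fun t => Qf (x, t)) (-(8*t)) t := by
  have h2 : HasDerivAt (fun t : ℝ => 4*t^2) (8*t) t := by
    have h := (hasDerivAt_pow 2 t).const_mul 4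
    refine h.congr_deriv ?_
    ring
  have h := (hasDerivAt_const t ((4+2*x)^2)).sub h2
  exact h.congr_deriv (by ring)

lemma hSx {t x : ℝ} (h : 0 < Qf (x,t)) :
    HasDerivAt (fun x => Real.sqrt (Qf (x,t))) (4*(4+2*x)/(2*Real.sqrt (Qf (x,t)))) x :=
  (hQx t x).sqrt h.ne'

lemma hSt {x t : ℝ} (h : 0 < Qf (x,t)) :
    HasDerivAt (fun t => Real.sqrt (Qf (x,t))) (-(8*t)/(2*Real.sqrt (Qf (x,t)))) t :=
  (hQt x t).sqrt h.ne'

noncomputable def W1 (p : ℝ × ℝ) : ℝ := (5/4)*Real.sqrt (Qf p) - (4+2*p.1)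
noncomputable def W2 (p : ℝ × ℝ) : ℝ := 4 - (3/4)*Real.sqrt (Qf p)

lemma pdXi_W1 (p : ℝ × ℝ) (h : 0 < Qf p) :
    pdXi W1 p = (5/4)*(4*(4+2*p.1)/(2*Real.sqrt (Qf p))) - 2 := by
  have h1 : HasDerivAt (fun x => W1 (x, p.2))
      ((5/4)*(4*(4+2*p.1)/(2*Real.sqrt (Qf (p.1, p.2)))) - 2) p.1 :=
    ((hSx h).const_mul (5/4)).sub (haff p.1)
  exact h1.deriv

lemma pdTau_W1 (p : ℝ × ℝ) (h : 0 < Qf p) :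
    pdTau W1 p = (5/4)*(-(8*p.2)/(2*Real.sqrt (Qf p))) := by
  have h1 : HasDerivAt (fun t => (5/4)*Real.sqrt (Qf (p.1, t)) - (4+2*p.1))
      ((5/4)*(-(8*p.2)/(2*Real.sqrt (Qf (p.1, p.2)))) - 0) p.2 :=
    ((hSt h).const_mul (5/4)).sub (hasDerivAt_const _ _)
  have h2 : pdTau W1 p = (5/4)*(-(8*p.2)/(2*Real.sqrt (Qf (p.1, p.2)))) - 0 := h1.deriv
  simpa using h2

lemma pdXi_W2 (p : ℝ × ℝ) (h : 0 < Qf p) :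
    pdXi W2 p = -((3/4)*(4*(4+2*p.1)/(2*Real.sqrt (Qf p)))) := by
  have h1 : HasDerivAt (fun x => W2 (x, p.2))
      (-((3/4)*(4*(4+2*p.1)/(2*Real.sqrt (Qf (p.1, p.2)))))) p.1 :=
    ((hSx h).const_mul (3/4)).const_sub 4
  exact h1.deriv

lemma pdTau_W2 (p : ℝ × ℝ) (h : 0 < Qf p) :
    pdTau W2 p = -((3/4)*(-(8*p.2)/(2*Real.sqrt (Qf p)))) := by
  have h1 : HasDerivAt (fun t => W2 (p.1, t))
      (-((3/4)*(-(8*p.2)/(2*Real.sqrt (Qf (p.1, p.2)))))) p.2 :=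
    ((hSt h).const_mul (3/4)).const_sub 4
  exact h1.deriv

lemma evQx (p : ℝ × ℝ) (h : 0 < Qf p) : ∀ᶠ x in nhds p.1, 0 < Qf (x, p.2) := by
  have hc : Continuous fun x => Qf (x, p.2) := by unfold Qf; fun_prop
  exact continuousAt_const.eventually_lt hc.continuousAt h

lemma evQt (p : ℝ × ℝ) (h : 0 < Qf p) : ∀ᶠ t in nhds p.2, 0 < Qf (p.1, t) := by
  have hc : Continuous fun t => Qf (p.1, t) := by unfold Qf; fun_prop
  exact continuousAt_const.eventually_lt hc.continuousAt h

lemma pdXiXi_W1 (p : ℝ × ℝ) (h : 0 < Qf p) :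
    pdXi (pdXi W1) p = (5/4)*((4*2*(2*Real.sqrt (Qf p))
      - 4*(4+2*p.1)*(2*(4*(4+2*p.1)/(2*Real.sqrt (Qf p)))))/(2*Real.sqrt (Qf p))^2) := by
  have hev : (fun x => pdXi W1 (x, p.2)) =ᶠ[nhds p.1]
      (fun x => (5/4)*(4*(4+2*x)/(2*Real.sqrt (Qf (x, p.2)))) - 2) :=
    (evQx p h).mono (fun x hx => pdXi_W1 (x, p.2) hx)
  have hs : (0:ℝ) < Real.sqrt (Qf p) := Real.sqrt_pos.mpr h
  have hN : HasDerivAt (fun x => 4*(4+2*x)) (4*2) p.1 := (haff p.1).const_mul 4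
  have hDen : HasDerivAt (fun x => 2*Real.sqrt (Qf (x, p.2)))
      (2*(4*(4+2*p.1)/(2*Real.sqrt (Qf p)))) p.1 := (hSx h).const_mul 2
  have hdiv := (hN.div hDen (by positivity)).const_mul ((5:ℝ)/4)
  have hD := hdiv.sub_const 2
  show deriv (fun x => pdXi W1 (x, p.2)) p.1 = _
  rw [hev.deriv_eq]
  exact hD.deriv

lemma pdTauTau_W1 (p : ℝ × ℝ) (h : 0 < Qf p) :
    pdTau (pdTau W1) p = (5/4)*((-8*(2*Real.sqrt (Qf p))
      - (-(8*p.2))*(2*(-(8*p.2)/(2*Real.sqrt (Qf p)))))/(2*Real.sqrt (Qf p))^2) := by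
  have hev : (fun t => pdTau W1 (p.1, t)) =ᶠ[nhds p.2]
      (fun t => (5/4)*(-(8*t)/(2*Real.sqrt (Qf (p.1, t))))) :=
    (evQt p h).mono (fun t ht => pdTau_W1 (p.1, t) ht)
  have hs : (0:ℝ) < Real.sqrt (Qf p) := Real.sqrt_pos.mpr h
  have hN : HasDerivAt (fun t : ℝ => -(8*t)) (-8) p.2 := by
    exact (((hasDerivAt_id p.2).const_mul 8).neg).congr_deriv (by ring)
  have hDen : HasDerivAt (fun t => 2*Real.sqrt (Qf (p.1, t)))
      (2*(-(8*p.2)/(2*Real.sqrt (Qf p)))) p.2 := (hSt h).const_mul 2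
  have hD := (hN.div hDen (by positivity)).const_mul ((5:ℝ)/4)
  show deriv (fun t => pdTau W1 (p.1, t)) p.2 = _
  rw [hev.deriv_eq]
  exact hD.deriv

lemma pdXiXi_W2 (p : ℝ × ℝ) (h : 0 < Qf p) :
    pdXi (pdXi W2) p = -((3/4)*((4*2*(2*Real.sqrt (Qf p))
      - 4*(4+2*p.1)*(2*(4*(4+2*p.1)/(2*Real.sqrt (Qf p)))))/(2*Real.sqrt (Qf p))^2)) := by
  have hev : (fun x => pdXi W2 (x, p.2)) =ᶠ[nhds p.1]
      (fun x => -((3/4)*(4*(4+2*x)/(2*Real.sqrt (Qf (x, p.2)))))) :=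
    (evQx p h).mono (fun x hx => pdXi_W2 (x, p.2) hx)
  have hs : (0:ℝ) < Real.sqrt (Qf p) := Real.sqrt_pos.mpr h
  have hN : HasDerivAt (fun x => 4*(4+2*x)) (4*2) p.1 := (haff p.1).const_mul 4
  have hDen : HasDerivAt (fun x => 2*Real.sqrt (Qf (x, p.2)))
      (2*(4*(4+2*p.1)/(2*Real.sqrt (Qf p)))) p.1 := (hSx h).const_mul 2
  have hD := ((hN.div hDen (by positivity)).const_mul ((3:ℝ)/4)).neg
  show deriv (fun x => pdXi W2 (x, p.2)) p.1 = _
  rw [hev.deriv_eq]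
  exact hD.deriv

lemma pdTauTau_W2 (p : ℝ × ℝ) (h : 0 < Qf p) :
    pdTau (pdTau W2) p = -((3/4)*((-8*(2*Real.sqrt (Qf p))
      - (-(8*p.2))*(2*(-(8*p.2)/(2*Real.sqrt (Qf p)))))/(2*Real.sqrt (Qf p))^2)) := by
  have hev : (fun t => pdTau W2 (p.1, t)) =ᶠ[nhds p.2]
      (fun t => -((3/4)*(-(8*t)/(2*Real.sqrt (Qf (p.1, t)))))) :=
    (evQt p h).mono (fun t ht => pdTau_W2 (p.1, t) ht)
  have hs : (0:ℝ) < Real.sqrt (Qf p) := Real.sqrt_pos.mpr h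
  have hN : HasDerivAt (fun t : ℝ => -(8*t)) (-8) p.2 := by
    exact (((hasDerivAt_id p.2).const_mul 8).neg).congr_deriv (by ring)
  have hDen : HasDerivAt (fun t => 2*Real.sqrt (Qf (p.1, t)))
      (2*(-(8*p.2)/(2*Real.sqrt (Qf p)))) p.2 := (hSt h).const_mul 2
  have hD := ((hN.div hDen (by positivity)).const_mul ((3:ℝ)/4)).neg
  show deriv (fun t => pdTau W2 (p.1, t)) p.2 = _
  rw [hev.deriv_eq]
  exact hD.deriv

lemma Qf_pos (p : ℝ × ℝ) (ha : 0 < 4 + 2*p.1 + 2*p.2) (hb : 0 < 4 + 2*p.1 - 2*p.2) :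
    0 < Qf p := by
  have h : Qf p = (4 + 2*p.1 + 2*p.2) * (4 + 2*p.1 - 2*p.2) := by unfold Qf; ring
  rw [h]; exact mul_pos ha hb

lemma sqrtQf (p : ℝ × ℝ) (ha : 0 < 4 + 2*p.1 + 2*p.2) :
    Real.sqrt (Qf p) = Real.sqrt (4 + 2*p.1 + 2*p.2) * Real.sqrt (4 + 2*p.1 - 2*p.2) := by
  have h : Qf p = (4 + 2*p.1 + 2*p.2) * (4 + 2*p.1 - 2*p.2) := by unfold Qf; ring
  rw [h, Real.sqrt_mul ha.le]

lemma U1_eq_W1 (p : ℝ × ℝ) (ha : 0 < 4 + 2*p.1 + 2*p.2) (hb : 0 < 4 + 2*p.1 - 2*p.2) :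
    U1 p = W1 p := by
  have hsb : (0:ℝ) < Real.sqrt (4 + 2*p.1 - 2*p.2) := Real.sqrt_pos.mpr hb
  have hb2 : Real.sqrt (4 + 2*p.1 - 2*p.2) ^ 2 = 4 + 2*p.1 - 2*p.2 := Real.sq_sqrt hb.le
  unfold U1 W1
  rw [sqrtQf p ha]
  rw [div_eq_iff (by positivity)]
  nlinarith [Real.sqrt_nonneg (4 + 2*p.1 + 2*p.2), hb2, hsb]

lemma U2_eq_W2 (p : ℝ × ℝ) (ha : 0 < 4 + 2*p.1 + 2*p.2) (hb : 0 < 4 + 2*p.1 - 2*p.2) :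
    U2 p = W2 p := by
  have hsb : (0:ℝ) < Real.sqrt (4 + 2*p.1 - 2*p.2) := Real.sqrt_pos.mpr hb
  have hb2 : Real.sqrt (4 + 2*p.1 - 2*p.2) ^ 2 = 4 + 2*p.1 - 2*p.2 := Real.sq_sqrt hb.le
  unfold U2 W2
  rw [sqrtQf p ha]
  rw [div_eq_iff (by positivity)]
  nlinarith [Real.sqrt_nonneg (4 + 2*p.1 + 2*p.2), hb2, hsb]

lemma evOx (p : ℝ × ℝ) (ha : 0 < 4 + 2*p.1 + 2*p.2) (hb : 0 < 4 + 2*p.1 - 2*p.2) :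
    ∀ᶠ x in nhds p.1, 0 < 4 + 2*x + 2*p.2 ∧ 0 < 4 + 2*x - 2*p.2 := by
  have h1 : ∀ᶠ x in nhds p.1, 0 < 4 + 2*x + 2*p.2 :=
    continuousAt_const.eventually_lt (by fun_prop) ha
  have h2 : ∀ᶠ x in nhds p.1, 0 < 4 + 2*x - 2*p.2 :=
    continuousAt_const.eventually_lt (by fun_prop) hb
  exact h1.and h2

lemma evOt (p : ℝ × ℝ) (ha : 0 < 4 + 2*p.1 + 2*p.2) (hb : 0 < 4 + 2*p.1 - 2*p.2) :
    ∀ᶠ t in nhds p.2, 0 < 4 + 2*p.1 + 2*t ∧ 0 < 4 + 2*p.1 - 2*t := by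
  have h1 : ∀ᶠ t in nhds p.2, 0 < 4 + 2*p.1 + 2*t :=
    continuousAt_const.eventually_lt (by fun_prop) ha
  have h2 : ∀ᶠ t in nhds p.2, 0 < 4 + 2*p.1 - 2*t :=
    continuousAt_const.eventually_lt (by fun_prop) hb
  exact h1.and h2

lemma pdXi_U1_eq (p : ℝ × ℝ) (ha : 0 < 4 + 2*p.1 + 2*p.2) (hb : 0 < 4 + 2*p.1 - 2*p.2) :
    pdXi U1 p = pdXi W1 p := by
  have hev : (fun x => U1 (x, p.2)) =ᶠ[nhds p.1] (fun x => W1 (x, p.2)) :=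
    (evOx p ha hb).mono (fun x hx => U1_eq_W1 (x, p.2) hx.1 hx.2)
  exact hev.deriv_eq

lemma pdTau_U1_eq (p : ℝ × ℝ) (ha : 0 < 4 + 2*p.1 + 2*p.2) (hb : 0 < 4 + 2*p.1 - 2*p.2) :
    pdTau U1 p = pdTau W1 p := by
  have hev : (fun t => U1 (p.1, t)) =ᶠ[nhds p.2] (fun t => W1 (p.1, t)) :=
    (evOt p ha hb).mono (fun t ht => U1_eq_W1 (p.1, t) ht.1 ht.2)
  exact hev.deriv_eq

lemma pdXi_U2_eq (p : ℝ × ℝ) (ha : 0 < 4 + 2*p.1 + 2*p.2) (hb : 0 < 4 + 2*p.1 - 2*p.2) :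
    pdXi U2 p = pdXi W2 p := by
  have hev : (fun x => U2 (x, p.2)) =ᶠ[nhds p.1] (fun x => W2 (x, p.2)) :=
    (evOx p ha hb).mono (fun x hx => U2_eq_W2 (x, p.2) hx.1 hx.2)
  exact hev.deriv_eq

lemma pdTau_U2_eq (p : ℝ × ℝ) (ha : 0 < 4 + 2*p.1 + 2*p.2) (hb : 0 < 4 + 2*p.1 - 2*p.2) :
    pdTau U2 p = pdTau W2 p := by
  have hev : (fun t => U2 (p.1, t)) =ᶠ[nhds p.2] (fun t => W2 (p.1, t)) :=
    (evOt p ha hb).mono (fun t ht => U2_eq_W2 (p.1, t) ht.1 ht.2)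
  exact hev.deriv_eq

lemma pdXiXi_U1_eq (p : ℝ × ℝ) (ha : 0 < 4 + 2*p.1 + 2*p.2) (hb : 0 < 4 + 2*p.1 - 2*p.2) :
    pdXi (pdXi U1) p = pdXi (pdXi W1) p := by
  have hev : (fun x => pdXi U1 (x, p.2)) =ᶠ[nhds p.1] (fun x => pdXi W1 (x, p.2)) :=
    (evOx p ha hb).mono (fun x hx => pdXi_U1_eq (x, p.2) hx.1 hx.2)
  exact hev.deriv_eq

lemma pdTauTau_U1_eq (p : ℝ × ℝ) (ha : 0 < 4 + 2*p.1 + 2*p.2) (hb : 0 < 4 + 2*p.1 - 2*p.2) :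
    pdTau (pdTau U1) p = pdTau (pdTau W1) p := by
  have hev : (fun t => pdTau U1 (p.1, t)) =ᶠ[nhds p.2] (fun t => pdTau W1 (p.1, t)) :=
    (evOt p ha hb).mono (fun t ht => pdTau_U1_eq (p.1, t) ht.1 ht.2)
  exact hev.deriv_eq

lemma pdXiXi_U2_eq (p : ℝ × ℝ) (ha : 0 < 4 + 2*p.1 + 2*p.2) (hb : 0 < 4 + 2*p.1 - 2*p.2) :
    pdXi (pdXi U2) p = pdXi (pdXi W2) p := by
  have hev : (fun x => pdXi U2 (x, p.2)) =ᶠ[nhds p.1] (fun x => pdXi W2 (x, p.2)) :=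
    (evOx p ha hb).mono (fun x hx => pdXi_U2_eq (x, p.2) hx.1 hx.2)
  exact hev.deriv_eq

lemma pdTauTau_U2_eq (p : ℝ × ℝ) (ha : 0 < 4 + 2*p.1 + 2*p.2) (hb : 0 < 4 + 2*p.1 - 2*p.2) :
    pdTau (pdTau U2) p = pdTau (pdTau W2) p := by
  have hev : (fun t => pdTau U2 (p.1, t)) =ᶠ[nhds p.2] (fun t => pdTau W2 (p.1, t)) :=
    (evOt p ha hb).mono (fun t ht => pdTau_U2_eq (p.1, t) ht.1 ht.2)
  exact hev.deriv_eq

/-- `(U1, U2)` satisfies the spacetime wave map system on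
`Ω = {4 + 2ξ + 2τ > 0, 4 + 2ξ − 2τ > 0}` wherever `U1 ≠ 0`, together with the
real-analytic initial conditions of Example 4.1 along `τ = 0` for `ξ > −2`. -/
theorem example41_spacetime_solution :
    (∀ p : ℝ × ℝ, 0 < 4 + 2 * p.1 + 2 * p.2 → 0 < 4 + 2 * p.1 - 2 * p.2 → U1 p ≠ 0 →
      pdTau (pdTau U1) p - pdXi (pdXi U1) p =
        (1 / (2 * U1 p)) *
          ((pdTau U1 p) ^ 2 + (pdTau U2 p) ^ 2 - (pdXi U1 p) ^ 2 - (pdXi U2 p) ^ 2) ∧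
      pdTau (pdTau U2) p - pdXi (pdXi U2) p =
        (1 / U1 p) * (pdTau U1 p * pdTau U2 p - pdXi U1 p * pdXi U2 p)) ∧
    (∀ ξ : ℝ, -2 < ξ →
      U1 (ξ, 0) = 1 + ξ / 2 ∧ U2 (ξ, 0) = 1 - (3 / 2) * ξ ∧
      pdTau U1 (ξ, 0) = 0 ∧ pdTau U2 (ξ, 0) = 0) := by
  constructor
  · intro p ha hb hne
    have hQ : 0 < Qf p := Qf_pos p ha hb
    have hs : (0:ℝ) < Real.sqrt (Qf p) := Real.sqrt_pos.mpr hQ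
    have hs2 : Real.sqrt (Qf p) ^ 2 = (4 + 2*p.1)^2 - 4*p.2^2 := Real.sq_sqrt hQ.le
    have hU1 : U1 p = (5/4)*Real.sqrt (Qf p) - (4+2*p.1) := U1_eq_W1 p ha hb
    have hU1ne : (5/4)*Real.sqrt (Qf p) - (4+2*p.1) ≠ 0 := hU1 ▸ hne
    rw [pdTauTau_U1_eq p ha hb, pdXiXi_U1_eq p ha hb, pdTauTau_U2_eq p ha hb,
      pdXiXi_U2_eq p ha hb, pdTau_U1_eq p ha hb, pdXi_U1_eq p ha hb,
      pdTau_U2_eq p ha hb, pdXi_U2_eq p ha hb, hU1,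
      pdTauTau_W1 p hQ, pdXiXi_W1 p hQ, pdTauTau_W2 p hQ, pdXiXi_W2 p hQ,
      pdTau_W1 p hQ, pdXi_W1 p hQ, pdTau_W2 p hQ, pdXi_W2 p hQ]
    set s := Real.sqrt (Qf p) with hsdef
    constructor
    · trans (-5/s)
      · field_simp
        ring_nf
        linear_combination (-16)*hs2
      · rw [div_mul_eq_mul_div, eq_div_iff (by positivity), one_mul]
        field_simp
        ring_nf
        linear_combination (-544)*hs2
    · trans (3/s)
      · field_simp
        ring_nf
        linear_combination 16*hs2
      · rw [div_mul_eq_mul_div, eq_div_iff (by positivity), one_mul]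
        field_simp
        ring_nf
        linear_combination 80*hs2
  · intro ξ hξ
    have ha : 0 < 4 + 2*ξ + 2*(0:ℝ) := by linarith
    have hb : 0 < 4 + 2*ξ - 2*(0:ℝ) := by linarith
    have hQ : 0 < Qf (ξ, 0) := Qf_pos (ξ, 0) ha hb
    have hsq : Real.sqrt (Qf (ξ, 0)) = 4 + 2*ξ := by
      have h : Qf (ξ, 0) = (4 + 2*ξ)^2 := by unfold Qf; ring
      rw [h, Real.sqrt_sq (by linarith)]
    refine ⟨?_, ?_, ?_, ?_⟩
    · rw [U1_eq_W1 (ξ, 0) ha hb]; unfold W1; rw [hsq]; ring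
    · rw [U2_eq_W2 (ξ, 0) ha hb]; unfold W2; rw [hsq]; ring
    · rw [pdTau_U1_eq (ξ, 0) ha hb, pdTau_W1 (ξ, 0) hQ]; norm_num
    · rw [pdTau_U2_eq (ξ, 0) ha hb, pdTau_W2 (ξ, 0) hQ]; norm_num
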